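/- Let K be a number field with algebraic closure K̄, let ζ ∈ K̄ be a primitive 5th root of unity, let i ∈ K̄ satisfy i² = −1, and set θ₁ := −((−4i+4)ζ³ + 4ζ² − 4iζ − 2i + 5). Let b ∈ K be nonzero and let E: y² = x³ + bx. Choose x₁ ∈ K̄ with x₁² = θ₁b and y₁ ∈ K̄ with y₁² = (θ₁ + 1)b·x₁. Then P₁ := (x₁, y₁) is a point of E(K̄) of exact order 5, the point φ₁(P₁) := (−x₁, i·y₁) also lies in E(K̄) and has exact order 5, φ₁(P₁) is not a multiple of P₁, and {P₁, φ₁(P₁)} is a ℤ/5ℤ-basis of the 5-torsion subgroup E[5] of E(K̄). -/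

import Mathlib

noncomputable section

/-- The elliptic curve `y² = x³ + bx + c` as an affine Weierstrass curve. -/
def curveBC {F : Type*} [Field F] (b c : F) : WeierstrassCurve.Affine F :=
  { a₁ := 0, a₂ := 0, a₃ := 0, a₄ := b, a₆ := c }

open Classical in
/-- `{P, Q}` is a `ℤ/mℤ`-basis of the `m`-torsion subgroup `E[m]`. -/
def IsTorsionBasis {F : Type*} [Field F] {W : WeierstrassCurve.Affine F} (m : ℕ)
    (P Q : W.Point) : Prop :=
  m • P = 0 ∧ m • Q = 0 ∧
    (∀ R : W.Point, m • R = 0 → ∃ a b : ℤ, R = a • P + b • Q) ∧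
    (∀ a b : ℤ, a • P + b • Q = 0 → (m : ℤ) ∣ a ∧ (m : ℤ) ∣ b)

open WeierstrassCurve.Affine WeierstrassCurve.Affine.Point

open Classical

@[simp] lemma curveBC_a₁ {F : Type*} [Field F] (b c : F) : (curveBC b c).a₁ = 0 := rfl
@[simp] lemma curveBC_a₂ {F : Type*} [Field F] (b c : F) : (curveBC b c).a₂ = 0 := rfl
@[simp] lemma curveBC_a₃ {F : Type*} [Field F] (b c : F) : (curveBC b c).a₃ = 0 := rfl
@[simp] lemma curveBC_a₄ {F : Type*} [Field F] (b c : F) : (curveBC b c).a₄ = b := rfl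
@[simp] lemma curveBC_a₆ {F : Type*} [Field F] (b c : F) : (curveBC b c).a₆ = c := rfl

/-- Projection to the x-coordinate (with junk value `0` at infinity). -/
def ptX {F : Type*} [Field F] {W : WeierstrassCurve.Affine F} : W.Point → F
  | .zero => 0
  | @WeierstrassCurve.Affine.Point.some _ _ _ x _ _ => x

@[simp] lemma ptX_some {F : Type*} [Field F] {W : WeierstrassCurve.Affine F} {x y : F}
    (h : W.Nonsingular x y) : ptX (Point.some _ _ h) = x := rfl

lemma someEq {F : Type*} [Field F] {W : WeierstrassCurve.Affine F} {x₁ y₁ x₂ y₂ : F}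
    (h₁ : W.Nonsingular x₁ y₁) (hx : x₁ = x₂) (hy : y₁ = y₂) (h₂ : W.Nonsingular x₂ y₂) :
    Point.some _ _ h₁ = Point.some _ _ h₂ := by subst hx; subst hy; rfl

/-- The key 5-division-polynomial identity for `y² = x³ + bx`. -/
lemma keyE {F : Type*} [Field F] (bb x y L M : F)
    (hy : y^2 = x^3 + bb*x) (hL : L*(2*y) = 3*x^2 + bb)
    (hM : M * ((L^2-2*x) - x) = (-(L*((L^2-2*x)-x)+y)) - y) :
    5*x^12 + 62*bb*x^10 - 105*bb^2*x^8 - 300*bb^3*x^6 - 125*bb^4*x^4 - 50*bb^5*x^2 + bb^6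
      = 64*y^6*((L^2-2*x)-x)^2*((L^2-2*x) - (M^2-(L^2-2*x)-x)) := by
  linear_combination
    ((-32)*L^5*y^5 + (-48)*L^4*x^2*y^4 + (-16)*L^4*y^4*bb + (-72)*L^3*x^4*y^3
      + (-48)*L^3*x^2*y^3*bb + (288)*L^3*x*y^5 + (-8)*L^3*y^3*bb^2 + (-108)*L^2*x^6*y^2
      + (-108)*L^2*x^4*y^2*bb + (432)*L^2*x^3*y^4 + (-36)*L^2*x^2*y^2*bb^2
      + (144)*L^2*x*y^4*bb + (128)*L^2*y^6 + (-4)*L^2*y^2*bb^3 + (-162)*L*x^8*y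
      + (-216)*L*x^6*y*bb + (648)*L*x^5*y^3 + (-108)*L*x^4*y*bb^2 + (432)*L*x^3*y^3*bb
      + (-672)*L*x^2*y^5 + (-24)*L*x^2*y*bb^3 + (72)*L*x*y^3*bb^2 + (64)*L*y^5*bb
      + (-2)*L*y*bb^4 + (-243)*x^10 + (-405)*x^8*bb + (972)*x^7*y^2 + (-270)*x^6*bb^2
      + (972)*x^5*y^2*bb + (-1008)*x^4*y^4 + (-90)*x^4*bb^3 + (324)*x^3*y^2*bb^2
      + (-240)*x^2*y^4*bb + (-15)*x^2*bb^4 + (-384)*x*y^6 + (36)*x*y^2*bb^3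
      + (32)*y^4*bb^2 + (-1)*bb^5) * hL
    + ((724)*x^9 + (672)*x^7*bb + (-2192)*x^6*y^2 + (648)*x^5*bb^2 + (-1024)*x^4*y^2*bb
      + (832)*x^3*y^4 + (192)*x^3*bb^3 + (-272)*x^2*y^2*bb^2 + (-128)*x*y^4*bb
      + (68)*x*bb^4 + (256)*y^6 + (32)*y^2*bb^3) * hy
    + (64*y^6*(M*((L^2-2*x)-x) + ((-(L*((L^2-2*x)-x)+y)) - y))) * hM

section Quint

variable {F : Type*} [Field F] [CharZero F]

lemma theta_ne_zero {θ : F} (hH : θ^4 + 12*θ^3 - 26*θ^2 - 52*θ + 1 = 0) : θ ≠ 0 := by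
  intro h0; rw [h0] at hH; norm_num at hH

lemma theta_add_one_ne_zero {θ : F} (hH : θ^4 + 12*θ^3 - 26*θ^2 - 52*θ + 1 = 0) : θ + 1 ≠ 0 := by
  intro h0
  have h1 : θ = -1 := eq_neg_of_add_eq_zero_left h0
  rw [h1] at hH; norm_num at hH

lemma q3_ne_zero {θ : F} (hH : θ^4 + 12*θ^3 - 26*θ^2 - 52*θ + 1 = 0) : 3*θ^2 + 6*θ - 1 ≠ 0 := by
  intro h0
  have h1 : (1:F) = 0 := by
    linear_combination (((-63)/(512) : F) + ((-27)/(512) : F)*θ) * hH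
      + (((-575)/(512) : F) + ((-201)/(512) : F)*θ + ((111)/(512) : F)*θ^2
        + ((9)/(512) : F)*θ^3) * h0
  exact one_ne_zero h1

lemma q5_ne_zero {θ : F} (hH : θ^4 + 12*θ^3 - 26*θ^2 - 52*θ + 1 = 0) : 5*θ^2 + 2*θ + 1 ≠ 0 := by
  intro h0
  have h1 : (1:F) = 0 := by
    linear_combination (((117)/(2560) : F) + ((41)/(512) : F)*θ) * hH
      + (((2443)/(2560) : F) + ((993)/(2560) : F)*θ + ((-499)/(2560) : F)*θ^2
        + ((-41)/(2560) : F)*θ^3) * h0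
  exact one_ne_zero h1

/-- A point with `x² = θb`, `y² = (θ+1)bx` (θ a root of the quartic) is a nonzero 5-torsion
point, and we record its double. -/
lemma quint {bb θ x y : F} (hbb : bb ≠ 0)
    (hH : θ^4 + 12*θ^3 - 26*θ^2 - 52*θ + 1 = 0)
    (hx : x^2 = θ*bb) (hy : y^2 = (θ+1)*bb*x) :
    ∃ (h : (curveBC bb 0).Nonsingular x y) (x₂ y₂ : F) (h₂ : (curveBC bb 0).Nonsingular x₂ y₂),
      Point.some _ _ h + Point.some _ _ h = Point.some _ _ h₂ ∧
      4*θ*(θ+1)*x₂ = (θ-1)^2*x ∧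
      5 • Point.some _ _ h = 0 := by
  have hθ0 : θ ≠ 0 := theta_ne_zero hH
  have hθ1 : θ + 1 ≠ 0 := theta_add_one_ne_zero hH
  have hq3 : 3*θ^2 + 6*θ - 1 ≠ 0 := q3_ne_zero hH
  have hx0 : x ≠ 0 := by
    intro h0; rw [h0] at hx
    exact mul_ne_zero hθ0 hbb (by linear_combination -hx)
  have hy0 : y ≠ 0 := by
    intro h0; rw [h0] at hy
    exact mul_ne_zero (mul_ne_zero hθ1 hbb) hx0 (by linear_combination -hy)
  have hy' : y^2 = x^3 + bb*x := by linear_combination hy - x*hx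
  have heq : (curveBC bb 0).Equation x y := by
    rw [equation_iff]; simp only [curveBC_a₁, curveBC_a₂, curveBC_a₃, curveBC_a₄, curveBC_a₆]
    linear_combination hy - x*hx
  have hYne : y ≠ (curveBC bb 0).negY x y := by
    simp only [negY, curveBC_a₁, curveBC_a₃]
    intro hc; exact hy0 (by linear_combination hc/2)
  have h : (curveBC bb 0).Nonsingular x y := by
    rw [nonsingular_iff]
    refine ⟨heq, Or.inr ?_⟩
    simp only [curveBC_a₁, curveBC_a₃]
    intro hc; exact hy0 (by linear_combination hc/2)
  set W := curveBC bb 0 with hW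
  set L := W.slope x x y y with hLdef
  have e2 : Point.some _ _ h + Point.some _ _ h = Point.some _ _ (nonsingular_add h h fun hxy => hYne hxy.2) :=
    add_self_of_Y_ne hYne
  have hL : L = (3*x^2 + bb)/(2*y) := by
    rw [hLdef, slope_of_Y_ne rfl hYne]
    simp only [negY, curveBC_a₁, curveBC_a₂, curveBC_a₃, curveBC_a₄, hW]
    congr 1 <;> ring
  have h2y : (2:F)*y ≠ 0 := mul_ne_zero two_ne_zero hy0
  have hLy : L * (2*y) = 3*x^2 + bb := by rw [hL]; field_simp
  have haX : W.addX x x L = L^2 - 2*x := by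
    simp only [WeierstrassCurve.Affine.addX, curveBC_a₁, curveBC_a₂, hW]; ring
  have hX2 : 4*θ*(θ+1)*(W.addX x x L) = (θ-1)^2*x := by
    apply mul_left_cancel₀ (pow_ne_zero 2 h2y)
    rw [haX]
    linear_combination
      ((8)*L*y*θ^2 + (8)*L*y*θ + (12)*x^2*θ^2 + (12)*x^2*θ + (4)*bb*θ^2 + (4)*bb*θ) * hLy
      + ((-36)*x*θ^2 + (-24)*x*θ + (-4)*x) * hy
      + ((36)*x^2*θ^2 + (36)*x^2*θ + (-4)*bb*θ + (-4)*bb) * hx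
  have hxx : W.addX x x L ≠ x := by
    intro hc; rw [hc] at hX2
    have h0 : (3*θ^2 + 6*θ - 1)*x = 0 := by linear_combination hX2
    rcases mul_eq_zero.mp h0 with h0 | h0
    exacts [hq3 h0, hx0 h0]
  have h₂ : W.Nonsingular (W.addX x x L) (W.addY x x y L) := nonsingular_add h h fun hxy => hYne hxy.2
  have e3 : Point.some _ _ h₂ + Point.some _ _ h =
      Point.some _ _ (nonsingular_add h₂ h fun hc => (hxx hc.1).elim) := add_of_X_ne hxx
  set M := W.slope (W.addX x x L) x (W.addY x x y L) y with hMdef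
  have haY : W.addY x x y L = -(L*((L^2-2*x)-x)+y) := by
    simp only [WeierstrassCurve.Affine.addY, WeierstrassCurve.Affine.negAddY, negY,
      curveBC_a₁, curveBC_a₃, hW, haX, WeierstrassCurve.Affine.addX, curveBC_a₂]
    ring
  have hM0 : M * (W.addX x x L - x) = W.addY x x y L - y := by
    rw [hMdef, slope_of_X_ne hxx, div_mul_cancel₀ _ (sub_ne_zero.mpr hxx)]
  rw [haX, haY] at hM0
  have hpsi5 : 5*x^12 + 62*bb*x^10 - 105*bb^2*x^8 - 300*bb^3*x^6 - 125*bb^4*x^4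
      - 50*bb^5*x^2 + bb^6 = 0 := by
    linear_combination
      ((5)*x^10 + (5)*x^8*bb*θ + (62)*x^8*bb + (5)*x^6*bb^2*θ^2 + (62)*x^6*bb^2*θ
        + (-105)*x^6*bb^2 + (5)*x^4*bb^3*θ^3 + (62)*x^4*bb^3*θ^2 + (-105)*x^4*bb^3*θ
        + (-300)*x^4*bb^3 + (5)*x^2*bb^4*θ^4 + (62)*x^2*bb^4*θ^3 + (-105)*x^2*bb^4*θ^2
        + (-300)*x^2*bb^4*θ + (-125)*x^2*bb^4 + (5)*bb^5*θ^5 + (62)*bb^5*θ^4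
        + (-105)*bb^5*θ^3 + (-300)*bb^5*θ^2 + (-125)*bb^5*θ + (-50)*bb^5) * hx
      + (bb^6*(5*θ^2 + 2*θ + 1)) * hH
  have hkey := keyE bb x y L M hy' hLy hM0
  have hz : 64*y^6*((L^2-2*x)-x)^2*((L^2-2*x) - (M^2-(L^2-2*x)-x)) = 0 :=
    hkey.symm.trans hpsi5
  have hfac1 : (L^2-2*x) - x ≠ 0 := by rw [← haX]; exact sub_ne_zero.mpr hxx
  have h3 : (L^2-2*x) - (M^2-(L^2-2*x)-x) = 0 := by
    rcases mul_eq_zero.mp hz with h0 | h0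
    · rcases mul_eq_zero.mp h0 with h0 | h0
      · exact absurd h0 (mul_ne_zero (by norm_num) (pow_ne_zero 6 hy0))
      · exact absurd h0 (pow_ne_zero 2 hfac1)
    · exact h0
  have haX3 : W.addX (W.addX x x L) x M = M^2 - (L^2-2*x) - x := by
    simp only [WeierstrassCurve.Affine.addX, curveBC_a₁, curveBC_a₂, hW, haX]; ring
  have hx32 : W.addX (W.addX x x L) x M = W.addX x x L := by
    rw [haX3, haX]; linear_combination -h3
  have h₃ : W.Nonsingular (W.addX (W.addX x x L) x M)
      (W.addY (W.addX x x L) x (W.addY x x y L) M) := nonsingular_add h₂ h fun hc => (hxx hc.1).elim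
  rcases Y_eq_of_X_eq h₃.1 h₂.1 hx32 with hyy | hyy
  · exfalso
    have heq32 : Point.some _ _ h₃ = Point.some _ _ h₂ := someEq h₃ hx32 hyy h₂
    rw [heq32] at e3
    exact some_ne_zero h (add_eq_left.mp e3)
  · have hneg : Point.some _ _ h₃ = -Point.some _ _ h₂ := by
      rw [neg_some]; exact someEq h₃ hx32 hyy _
    have e5 : (5:ℕ) • Point.some _ _ h = Point.some _ _ h₂ + Point.some _ _ h₃ := by
      rw [← e3, ← e2, show (5:ℕ) = 2+(2+1) from rfl, add_nsmul, add_nsmul, two_nsmul, one_nsmul]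
    refine ⟨h, _, _, h₂, e2, hX2, ?_⟩
    rw [e5, hneg, add_neg_cancel]

/-- Any nonzero 5-torsion point of `y² = x³ + bx` has `x`-coordinate a root of the
5-division polynomial. -/
lemma torsionX {bb x y : F} (h : (curveBC bb 0).Nonsingular x y)
    (h5 : 5 • Point.some _ _ h = 0) :
    5*x^12 + 62*bb*x^10 - 105*bb^2*x^8 - 300*bb^3*x^6 - 125*bb^4*x^4 - 50*bb^5*x^2 + bb^6
      = 0 := by
  let W := curveBC bb 0
  have hW : W = curveBC bb 0 := rfl
  have heqn : y^2 = x^3 + bb*x := by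
    have h1 := h.1
    rw [equation_iff] at h1
    simp only [hW, curveBC_a₁, curveBC_a₂, curveBC_a₃, curveBC_a₄, curveBC_a₆] at h1
    linear_combination h1
  have hy0 : y ≠ 0 := by
    intro h0
    have hYeq : y = W.negY x y := by
      simp only [negY, curveBC_a₁, curveBC_a₃, hW, h0]; ring
    have e0 : Point.some _ _ h + Point.some _ _ h = 0 := add_self_of_Y_eq hYeq
    have e5 : (5:ℕ) • Point.some _ _ h = Point.some _ _ h := by
      rw [show (5:ℕ) = 2+2+1 from rfl, add_nsmul, add_nsmul, two_nsmul, one_nsmul, e0]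
      simp
    rw [h5] at e5
    exact some_ne_zero h e5.symm
  have hYne : y ≠ W.negY x y := by
    simp only [negY, curveBC_a₁, curveBC_a₃, hW]
    intro hc; exact hy0 (by linear_combination hc/2)
  have e2 : Point.some _ _ h + Point.some _ _ h = Point.some _ _ (nonsingular_add h h fun hxy => hYne hxy.2) :=
    add_self_of_Y_ne hYne
  set L := W.slope x x y y with hLdef
  have hL : L = (3*x^2 + bb)/(2*y) := by
    rw [hLdef, slope_of_Y_ne rfl hYne]
    simp only [negY, curveBC_a₁, curveBC_a₂, curveBC_a₃, curveBC_a₄, hW]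
    congr 1 <;> ring
  have h2y : (2:F)*y ≠ 0 := mul_ne_zero two_ne_zero hy0
  have hLy : L * (2*y) = 3*x^2 + bb := by rw [hL]; field_simp
  have haX : W.addX x x L = L^2 - 2*x := by
    simp only [WeierstrassCurve.Affine.addX, curveBC_a₁, curveBC_a₂, hW]; ring
  have h₂ : W.Nonsingular (W.addX x x L) (W.addY x x y L) := nonsingular_add h h fun hxy => hYne hxy.2
  by_cases hxx : W.addX x x L = x
  · exfalso
    rcases Y_eq_of_X_eq h₂.1 h.1 hxx with hyy | hyy
    · have heq2 : Point.some _ _ h₂ = Point.some _ _ h := someEq h₂ hxx hyy h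
      rw [heq2] at e2
      exact some_ne_zero h (add_eq_left.mp e2)
    · have hneg : Point.some _ _ h₂ = -Point.some _ _ h := by
        rw [neg_some]; exact someEq h₂ hxx hyy _
      rw [hneg] at e2
      have e5 : (5:ℕ) • Point.some _ _ h = -Point.some _ _ h := by
        rw [show (5:ℕ) = 2+2+1 from rfl, add_nsmul, add_nsmul, two_nsmul, one_nsmul, e2]
        abel
      rw [h5] at e5
      exact some_ne_zero h (neg_eq_zero.mp e5.symm)
  · have e3 : Point.some _ _ h₂ + Point.some _ _ h =
        Point.some _ _ (nonsingular_add h₂ h fun hc => (hxx hc.1).elim) := add_of_X_ne hxx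
    set M := W.slope (W.addX x x L) x (W.addY x x y L) y with hMdef
    have haY : W.addY x x y L = -(L*((L^2-2*x)-x)+y) := by
      simp only [WeierstrassCurve.Affine.addY, WeierstrassCurve.Affine.negAddY, negY,
        curveBC_a₁, curveBC_a₃, hW, haX, WeierstrassCurve.Affine.addX, curveBC_a₂]
      ring
    have hM0 : M * (W.addX x x L - x) = W.addY x x y L - y := by
      rw [hMdef, slope_of_X_ne hxx, div_mul_cancel₀ _ (sub_ne_zero.mpr hxx)]
    rw [haX, haY] at hM0
    have h₃ : W.Nonsingular (W.addX (W.addX x x L) x M)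
        (W.addY (W.addX x x L) x (W.addY x x y L) M) :=
      nonsingular_add h₂ h fun hc => (hxx hc.1).elim
    have e5 : (5:ℕ) • Point.some _ _ h = Point.some _ _ h₂ + Point.some _ _ h₃ := by
      rw [← e3, ← e2, show (5:ℕ) = 2+(2+1) from rfl, add_nsmul, add_nsmul, two_nsmul, one_nsmul]
    have hsum : Point.some _ _ h₂ + Point.some _ _ h₃ = 0 := by rw [← e5, h5]
    have hneg : Point.some _ _ h₃ = -Point.some _ _ h₂ := eq_neg_of_add_eq_zero_right hsum
    rw [neg_some] at hneg
    have hx32 : W.addX (W.addX x x L) x M = W.addX x x L := congrArg ptX hneg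
    have haX3 : W.addX (W.addX x x L) x M = M^2 - (L^2-2*x) - x := by
      simp only [WeierstrassCurve.Affine.addX, curveBC_a₁, curveBC_a₂, hW, haX]; ring
    have hkey := keyE bb x y L M heqn hLy hM0
    rw [hkey]
    have hlast : (L^2-2*x) - (M^2-(L^2-2*x)-x) = 0 := by
      linear_combination -hx32 - haX + haX3
    rw [hlast, mul_zero]

end Quint

section Span

open Polynomial

variable {F : Type*} [Field F] [CharZero F]

/-- Every 5-torsion point lies in the span of two independent 5-torsion points. -/
lemma span5 {bb xP yP xQ yQ : F}
    (hP : (curveBC bb 0).Nonsingular xP yP) (hQ : (curveBC bb 0).Nonsingular xQ yQ)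
    (h5P : 5 • Point.some _ _ hP = 0) (h5Q : 5 • Point.some _ _ hQ = 0)
    (hindep : ∀ a c : ℤ, a • Point.some _ _ hP + c • Point.some _ _ hQ = 0 →
      (5:ℤ) ∣ a ∧ (5:ℤ) ∣ c)
    (R : (curveBC bb 0).Point) (hR : 5 • R = 0) :
    ∃ a c : ℤ, R = a • Point.some _ _ hP + c • Point.some _ _ hQ := by
  classical
  set ps : Polynomial F := C 5 * X^12 + C (62*bb) * X^10 - C (105*bb^2) * X^8
    - C (300*bb^3) * X^6 - C (125*bb^4) * X^4 - C (50*bb^5) * X^2 + C (bb^6) with hps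
  have hps12 : ps.coeff 12 = 5 := by
    rw [hps]
    simp only [coeff_add, coeff_sub, coeff_C_mul, coeff_X_pow, coeff_C]
    norm_num
  have hps0 : ps ≠ 0 := by
    intro hz
    rw [hz, coeff_zero] at hps12
    norm_num at hps12
  have hdeg : ps.natDegree ≤ 12 := by rw [hps]; compute_degree
  set U : Finset (curveBC bb 0).Point := insert 0 (ps.roots.toFinset.biUnion fun r =>
      ((X^2 - C (r^3 + bb*r)).roots.toFinset).biUnion fun s =>
        if hrs : (curveBC bb 0).Nonsingular r s then {Point.some _ _ hrs} else ∅) with hU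
  have hTU : ∀ T : (curveBC bb 0).Point, 5 • T = 0 → T ∈ U := by
    intro T hT
    cases T with
    | zero => exact Finset.mem_insert_self 0 _
    | @some xs ys hs =>
      have hroot := torsionX hs hT
      apply Finset.mem_insert_of_mem
      apply Finset.mem_biUnion.mpr
      refine ⟨xs, ?_, ?_⟩
      · rw [Multiset.mem_toFinset, Polynomial.mem_roots hps0]
        have hgoal : ps.eval xs = 0 := by
          rw [hps]
          simp only [eval_add, eval_sub, eval_mul, eval_pow, eval_C, eval_X]
          linear_combination hroot
        exact hgoal
      · apply Finset.mem_biUnion.mpr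
        refine ⟨ys, ?_, ?_⟩
        · rw [Multiset.mem_toFinset,
            Polynomial.mem_roots (Polynomial.X_pow_sub_C_ne_zero (by norm_num) _)]
          have h1 := hs.1
          rw [equation_iff] at h1
          simp only [curveBC_a₁, curveBC_a₂, curveBC_a₃, curveBC_a₄, curveBC_a₆] at h1
          have hgoal : (X^2 - C (xs^3 + bb*xs)).eval ys = 0 := by
            simp only [eval_sub, eval_pow, eval_X, eval_C]
            linear_combination h1
          exact hgoal
        · rw [dif_pos hs]; exact Finset.mem_singleton_self _
  set S : Finset (curveBC bb 0).Point := Finset.image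
      (fun p : Fin 5 × Fin 5 => (p.1 : ℕ) • Point.some _ _ hP + (p.2 : ℕ) • Point.some _ _ hQ)
      Finset.univ with hS
  have hinj : Set.InjOn
      (fun p : Fin 5 × Fin 5 => (p.1 : ℕ) • Point.some _ _ hP + (p.2 : ℕ) • Point.some _ _ hQ)
      (Finset.univ : Finset (Fin 5 × Fin 5)) := by
    rintro ⟨a1, a2⟩ - ⟨c1, c2⟩ - hEq
    simp only at hEq
    have hz : ((a1 : ℕ) : ℤ) • Point.some _ _ hP + ((a2 : ℕ) : ℤ) • Point.some _ _ hQ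
        = ((c1 : ℕ) : ℤ) • Point.some _ _ hP + ((c2 : ℕ) : ℤ) • Point.some _ _ hQ := by
      simpa [natCast_zsmul] using hEq
    have h0 : (((a1 : ℕ) : ℤ) - ((c1 : ℕ) : ℤ)) • Point.some _ _ hP
        + (((a2 : ℕ) : ℤ) - ((c2 : ℕ) : ℤ)) • Point.some _ _ hQ = 0 := by
      have h1 : (((a1:ℕ):ℤ) • Point.some _ _ hP + ((a2:ℕ):ℤ) • Point.some _ _ hQ)
          - (((c1:ℕ):ℤ) • Point.some _ _ hP + ((c2:ℕ):ℤ) • Point.some _ _ hQ) = 0 :=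
        sub_eq_zero.mpr hz
      rw [sub_zsmul, sub_zsmul, ← h1]
      abel
    obtain ⟨d1, d2⟩ := hindep _ _ h0
    have ha := a1.isLt
    have hc := c1.isLt
    have ha2 := a2.isLt
    have hc2 := c2.isLt
    have e1 : (a1 : ℕ) = (c1 : ℕ) := by omega
    have e2 : (a2 : ℕ) = (c2 : ℕ) := by omega
    exact Prod.ext (Fin.ext e1) (Fin.ext e2)
  have hSU : S ⊆ U := by
    intro s hs
    rw [hS] at hs
    obtain ⟨p, -, rfl⟩ := Finset.mem_image.mp hs
    apply hTU
    rw [smul_add, smul_smul, smul_smul, mul_comm 5 (p.1:ℕ), mul_comm 5 (p.2:ℕ),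
      ← smul_smul, ← smul_smul, h5P, h5Q, smul_zero, smul_zero, add_zero]
  have hinner : ∀ r : F, (((X^2 - C (r^3 + bb*r)).roots.toFinset).biUnion fun s =>
      if hrs : (curveBC bb 0).Nonsingular r s then ({Point.some _ _ hrs} :
        Finset (curveBC bb 0).Point) else ∅).card ≤ 2 := by
    intro r
    calc (((X^2 - C (r^3 + bb*r)).roots.toFinset).biUnion fun s =>
        if hrs : (curveBC bb 0).Nonsingular r s then ({Point.some _ _ hrs} :
          Finset (curveBC bb 0).Point) else ∅).card
        ≤ ∑ s ∈ (X^2 - C (r^3 + bb*r)).roots.toFinset, (if hrs :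
            (curveBC bb 0).Nonsingular r s then ({Point.some _ _ hrs} :
            Finset (curveBC bb 0).Point) else ∅).card := Finset.card_biUnion_le
      _ ≤ (X^2 - C (r^3 + bb*r)).roots.toFinset.card • 1 := by
          apply Finset.sum_le_card_nsmul
          intro s _
          split <;> simp
      _ ≤ 2 := by
          rw [smul_eq_mul, mul_one]
          refine le_trans (Multiset.toFinset_card_le _) (le_trans (Polynomial.card_roots' _) ?_)
          rw [Polynomial.natDegree_X_pow_sub_C]
  have hcardU : U.card ≤ 25 := by
    rw [hU]
    refine le_trans (Finset.card_insert_le _ _) ?_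
    have h1 : (ps.roots.toFinset.biUnion fun r =>
        ((X^2 - C (r^3 + bb*r)).roots.toFinset).biUnion fun s =>
          if hrs : (curveBC bb 0).Nonsingular r s then {Point.some _ _ hrs} else ∅).card
        ≤ ps.roots.toFinset.card • 2 :=
      le_trans Finset.card_biUnion_le (Finset.sum_le_card_nsmul _ _ 2 fun r _ => hinner r)
    have h2 : ps.roots.toFinset.card ≤ 12 :=
      le_trans (Multiset.toFinset_card_le _) (le_trans (Polynomial.card_roots' _) hdeg)
    rw [smul_eq_mul] at h1
    omega
  have hcardS : S.card = 25 := by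
    rw [hS, Finset.card_image_of_injOn hinj]
    simp
  have hUS : S = U := Finset.eq_of_subset_of_card_le hSU (by rw [hcardS]; exact hcardU)
  have hRU : R ∈ U := hTU R hR
  rw [← hUS, hS] at hRU
  obtain ⟨p, -, hp⟩ := Finset.mem_image.mp hRU
  exact ⟨(p.1 : ℕ), (p.2 : ℕ), by rw [← hp]; simp [natCast_zsmul]⟩

end Span

open Classical in
/-- For `E : y² = x³ + bx` over a number field `K`, with
`θ₁ = -((-4i+4)ζ³ + 4ζ² - 4iζ - 2i + 5)`, `x₁² = θ₁b` and `y₁² = (θ₁+1)b·x₁`, the point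
`P₁ = (x₁, y₁)` has exact order 5, so does `φ₁(P₁) = (-x₁, i·y₁)`, the latter is not a multiple
of `P₁`, and `{P₁, φ₁(P₁)}` is a `ℤ/5ℤ`-basis of `E[5]`. -/
theorem point_and_CM_image_form_basis_of_fiveTorsion
    (K : Type*) [Field K] [NumberField K]
    (ζ i : AlgebraicClosure K) (hζ : IsPrimitiveRoot ζ 5) (hi : i ^ 2 = -1)
    (θ : AlgebraicClosure K)
    (hθ : θ = -((-4 * i + 4) * ζ ^ 3 + 4 * ζ ^ 2 - 4 * i * ζ - 2 * i + 5))
    (b : K) (hb : b ≠ 0) (bb : AlgebraicClosure K) (hbb : bb = algebraMap K (AlgebraicClosure K) b)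
    (x₁ y₁ : AlgebraicClosure K) (hx₁ : x₁ ^ 2 = θ * bb) (hy₁ : y₁ ^ 2 = (θ + 1) * bb * x₁) :
    ∃ (h : (curveBC bb 0).Nonsingular x₁ y₁) (h' : (curveBC bb 0).Nonsingular (-x₁) (i * y₁)),
      addOrderOf (WeierstrassCurve.Affine.Point.some _ _ h) = 5 ∧
      addOrderOf (WeierstrassCurve.Affine.Point.some _ _ h') = 5 ∧
      (∀ n : ℤ, WeierstrassCurve.Affine.Point.some _ _ h' ≠
        n • WeierstrassCurve.Affine.Point.some _ _ h) ∧
      IsTorsionBasis 5 (WeierstrassCurve.Affine.Point.some _ _ h)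
        (WeierstrassCurve.Affine.Point.some _ _ h') := by
  classical
  haveI : Fact (Nat.Prime 5) := ⟨by norm_num⟩
  have hbb0 : bb ≠ 0 := by
    rw [hbb]
    intro hc
    exact hb ((algebraMap K (AlgebraicClosure K)).injective (by rw [hc, _root_.map_zero]))
  have hζ5 : ζ^5 = 1 := hζ.pow_eq_one
  have hζ1 : ζ ≠ 1 := hζ.ne_one (by norm_num)
  have hΦ : ζ^4 + ζ^3 + ζ^2 + ζ + 1 = 0 := by
    have hfac : (ζ - 1) * (ζ^4 + ζ^3 + ζ^2 + ζ + 1) = 0 := by linear_combination hζ5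
    exact (mul_eq_zero.mp hfac).resolve_left (sub_ne_zero.mpr hζ1)
  have hth2 : θ^2 = (-56)*ζ^3*i + (40)*ζ^3 + (16)*ζ^2*i + (40)*ζ^2 + (-40)*ζ*i
      + (-20)*i + (69) := by
    rw [hθ]
    linear_combination ((-32)*ζ^2*i + (32)*ζ + (-48)) * hΦ
      + ((16)*ζ^6 + (32)*ζ^4 + (16)*ζ^3 + (16)*ζ^2 + (16)*ζ + (4)) * hi
  have hth3 : θ^3 = (780)*ζ^3*i + (-572)*ζ^3 + (-176)*ζ^2*i + (-572)*ζ^2 + (604)*ζ*i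
      + (302)*i + (-913) := by
    linear_combination θ * hth2
      + ((-56)*ζ^3*i + (40)*ζ^3 + (16)*ζ^2*i + (40)*ζ^2 + (-40)*ζ*i + (-20)*i + (69)) * hθ
      + ((384)*ζ^2*i + (64)*ζ^2 + (-64)*ζ*i + (-448)*ζ + (-64)*i + (608)) * hΦ
      + ((-224)*ζ^6 + (64)*ζ^5 + (-384)*ζ^4 + (-128)*ζ^3 + (-128)*ζ^2 + (-160)*ζ + (-40)) * hi
  have hth4 : θ^4 = (-10608)*ζ^3*i + (7696)*ζ^3 + (2528)*ζ^2*i + (7696)*ζ^2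
      + (-8080)*ζ*i + (-4040)*i + (12489) := by
    linear_combination θ * hth3
      + ((780)*ζ^3*i + (-572)*ζ^3 + (-176)*ζ^2*i + (-572)*ζ^2 + (604)*ζ*i + (302)*i
        + (-913)) * hθ
      + ((-5408)*ζ^2*i + (-832)*ζ^2 + (704)*ζ*i + (6112)*ζ + (704)*i + (-8528)) * hΦ
      + ((3120)*ζ^6 + (-704)*ζ^5 + (5536)*ζ^4 + (2064)*ζ^3 + (2064)*ζ^2 + (2416)*ζ
        + (604)) * hi
  have hH : θ^4 + 12*θ^3 - 26*θ^2 - 52*θ + 1 = 0 := by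
    linear_combination hth4 + 12*hth3 - 26*hth2 - 52*hθ
  have hθ0 : θ ≠ 0 := theta_ne_zero hH
  have hθ1 : θ + 1 ≠ 0 := theta_add_one_ne_zero hH
  have hq5 : 5*θ^2 + 2*θ + 1 ≠ 0 := q5_ne_zero hH
  have hx1sq : x₁^2 = θ*bb := hx₁
  have hy1sq : y₁^2 = (θ+1)*bb*x₁ := hy₁
  obtain ⟨h, x₂, y₂, h₂, e2P, hX2P, h5P⟩ := quint hbb0 hH hx1sq hy1sq
  have hx' : (-x₁)^2 = θ*bb := by linear_combination hx₁
  have hy' : (i*y₁)^2 = (θ+1)*bb*(-x₁) := by linear_combination y₁^2*hi - hy₁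
  obtain ⟨h', x₂', y₂', h₂', e2Q, hX2Q, h5Q⟩ := quint hbb0 hH hx' hy'
  have hx10 : x₁ ≠ 0 := by
    intro h0; rw [h0] at hx₁
    exact mul_ne_zero hθ0 hbb0 (by linear_combination -hx₁)
  -- ℤ-smul bookkeeping for P
  have hP5z : (5:ℤ) • Point.some _ _ h = 0 := by
    have h1 : ((5:ℕ):ℤ) • Point.some _ _ h = 0 := by rw [natCast_zsmul]; exact h5P
    simpa using h1
  have hQ5z : (5:ℤ) • Point.some _ _ h' = 0 := by
    have h1 : ((5:ℕ):ℤ) • Point.some _ _ h' = 0 := by rw [natCast_zsmul]; exact h5Q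
    simpa using h1
  have hredP : ∀ m : ℤ, m • Point.some _ _ h = (m % 5) • Point.some _ _ h := by
    intro m
    conv_lhs => rw [show m = (m/5)*5 + m % 5 by omega]
    rw [add_zsmul, mul_zsmul, hP5z, smul_zero, zero_add]
  have hredQ : ∀ m : ℤ, m • Point.some _ _ h' = (m % 5) • Point.some _ _ h' := by
    intro m
    conv_lhs => rw [show m = (m/5)*5 + m % 5 by omega]
    rw [add_zsmul, mul_zsmul, hQ5z, smul_zero, zero_add]
  have h2z : (2:ℤ) • Point.some _ _ h = Point.some _ _ h₂ := by rw [two_zsmul]; exact e2P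
  have h3z : (3:ℤ) • Point.some _ _ h = -Point.some _ _ h₂ := by
    rw [show (3:ℤ) = 5 - 2 by norm_num, sub_zsmul, hP5z, h2z]; abel
  have h4z : (4:ℤ) • Point.some _ _ h = -Point.some _ _ h := by
    rw [show (4:ℤ) = 5 - 1 by norm_num, sub_zsmul, hP5z, one_zsmul]; abel
  have hxmx : -x₁ ≠ x₁ := by
    intro hc
    have h20 : (2:AlgebraicClosure K)*x₁ = 0 := by linear_combination -hc
    rcases mul_eq_zero.mp h20 with hc2 | hc2
    · exact two_ne_zero hc2
    · exact hx10 hc2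
  have hxc : -x₁ ≠ x₂ := by
    intro hc
    rw [← hc] at hX2P
    have h0 : (5*θ^2 + 2*θ + 1) * x₁ = 0 := by linear_combination -hX2P
    rcases mul_eq_zero.mp h0 with h0 | h0
    · exact hq5 h0
    · exact hx10 h0
  have part3 : ∀ n : ℤ, Point.some _ _ h' ≠ n • Point.some _ _ h := by
    intro n hQP
    rw [hredP n] at hQP
    have hcase : n % 5 = 0 ∨ n % 5 = 1 ∨ n % 5 = 2 ∨ n % 5 = 3 ∨ n % 5 = 4 := by omega
    rcases hcase with hc | hc | hc | hc | hc <;> rw [hc] at hQP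
    · rw [zero_zsmul] at hQP; exact some_ne_zero h' hQP
    · rw [one_zsmul] at hQP; exact hxmx (congrArg ptX hQP)
    · rw [h2z] at hQP; exact hxc (congrArg ptX hQP)
    · rw [h3z, neg_some] at hQP; exact hxc (congrArg ptX hQP)
    · rw [h4z, neg_some] at hQP; exact hxmx (congrArg ptX hQP)
  have hdvdP : ∀ m : ℤ, m • Point.some _ _ h = 0 → (5:ℤ) ∣ m := by
    intro m hm
    rw [hredP m] at hm
    have hcase : m % 5 = 0 ∨ m % 5 = 1 ∨ m % 5 = 2 ∨ m % 5 = 3 ∨ m % 5 = 4 := by omega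
    rcases hcase with hc | hc | hc | hc | hc
    · omega
    · rw [hc, one_zsmul] at hm; exact absurd hm (some_ne_zero h)
    · rw [hc, h2z] at hm; exact absurd hm (some_ne_zero h₂)
    · rw [hc, h3z, neg_eq_zero] at hm; exact absurd hm (some_ne_zero h₂)
    · rw [hc, h4z, neg_eq_zero] at hm; exact absurd hm (some_ne_zero h)
  have hindep : ∀ a c : ℤ, a • Point.some _ _ h + c • Point.some _ _ h' = 0 →
      (5:ℤ) ∣ a ∧ (5:ℤ) ∣ c := by
    intro a c habc
    have hc5 : (5:ℤ) ∣ c := by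
      by_contra hncd
      have hex : ∃ e : ℤ, (e*c) % 5 = 1 := by
        have h1 : c % 5 = 1 ∨ c % 5 = 2 ∨ c % 5 = 3 ∨ c % 5 = 4 := by omega
        rcases h1 with h1 | h1 | h1 | h1
        exacts [⟨1, by omega⟩, ⟨3, by omega⟩, ⟨2, by omega⟩, ⟨4, by omega⟩]
      obtain ⟨e, he⟩ := hex
      have hcQ : c • Point.some _ _ h' = -(a • Point.some _ _ h) :=
        eq_neg_of_add_eq_zero_right habc
      have hfin : Point.some _ _ h' = (-(e*a)) • Point.some _ _ h := by
        calc Point.some _ _ h' = ((e*c) % 5) • Point.some _ _ h' := by rw [he, one_zsmul]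
          _ = (e*c) • Point.some _ _ h' := (hredQ _).symm
          _ = e • (c • Point.some _ _ h') := mul_zsmul _ _ _
          _ = e • (-(a • Point.some _ _ h)) := by rw [hcQ]
          _ = -(e • (a • Point.some _ _ h)) := smul_neg _ _
          _ = (-(e*a)) • Point.some _ _ h := by rw [neg_zsmul, mul_zsmul]
      exact part3 _ hfin
    obtain ⟨k, hk⟩ := hc5
    have hcQ0 : c • Point.some _ _ h' = 0 := by
      rw [hk, mul_comm, mul_zsmul, hQ5z, smul_zero]
    have haP : a • Point.some _ _ h = 0 := by rwa [hcQ0, add_zero] at habc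
    exact ⟨hdvdP a haP, ⟨k, hk⟩⟩
  refine ⟨h, h', ?_, ?_, part3, h5P, h5Q, ?_, hindep⟩
  · exact addOrderOf_eq_prime h5P (some_ne_zero h)
  · exact addOrderOf_eq_prime h5Q (some_ne_zero h')
  · exact span5 h h' h5P h5Q hindep
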